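/- There exists a constant C > 0 such that for all B > 0 and all w ∈ ℝ one has |s_B(w) − (2/3)·(w)₊^(3/2)| ≤ C·B^(3/2). (Uniform estimate P′_B(w) − P′(w) = O(B^(3/2)), equation (25-3-29).) -/

import Mathlib

/-- The derivative of the magnetic Thomas–Fermi pressure. -/
noncomputable def s (B w : ℝ) : ℝ :=
  2 * B * ((1 / 2) * (max w 0) ^ ((1 : ℝ) / 2) +
    ∑' j : ℕ, (max (w - 2 * ((j : ℝ) + 1) * B) 0) ^ ((1 : ℝ) / 2))

open Real Finset


lemma key_ineq (x : ℝ) (hx : 0 ≤ x) :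
    0 ≤ (2/3)*Real.sqrt (x+1)^3 - (2/3)*Real.sqrt x^3 - (Real.sqrt x + Real.sqrt (x+1))/2 ∧
    (2/3)*Real.sqrt (x+1)^3 - (2/3)*Real.sqrt x^3 - (Real.sqrt x + Real.sqrt (x+1))/2
      ≤ 2/Real.sqrt (x+1) - 2/Real.sqrt (x+2) := by
  set a := Real.sqrt x with ha
  set b := Real.sqrt (x+1) with hb
  set c := Real.sqrt (x+2) with hc
  have ha0 : 0 ≤ a := Real.sqrt_nonneg x
  have hb0' : 0 ≤ b := Real.sqrt_nonneg _
  have hab : b^2 = a^2 + 1 := by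
    rw [ha, hb, Real.sq_sqrt (by linarith), Real.sq_sqrt hx]
  have hb1 : 1 ≤ b := by nlinarith
  have hb0 : 0 < b := by linarith
  have hbc : c^2 = b^2 + 1 := by
    rw [hb, hc, Real.sq_sqrt (by linarith), Real.sq_sqrt (by linarith)]; ring
  have hba : a ≤ b := by nlinarith
  have hcb : b ≤ c := by nlinarith [Real.sqrt_nonneg (x+2)]
  have hc0 : 0 < c := lt_of_lt_of_le hb0 hcb
  have hc2b : c ≤ 2*b := by nlinarith
  have hdiff : (2/3)*b^3 - (2/3)*a^3 - (a + b)/2 = (b-a)^3/6 := by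
    linear_combination ((a+b)/2) * hab
  constructor
  · rw [hdiff]
    have h1 : 0 ≤ b - a := by linarith
    positivity
  · rw [hdiff]
    have hba' : b - a = 1/(a+b) := by
      rw [eq_div_iff (by positivity)]; linear_combination hab
    have hcb' : c - b = 1/(b+c) := by
      rw [eq_div_iff (by positivity)]; linear_combination hbc
    have hrhs : 2/b - 2/c = 2/((b+c)*(b*c)) := by
      rw [div_sub_div _ _ (ne_of_gt hb0) (ne_of_gt hc0)]
      rw [show 2*c - b*2 = 2*(c-b) by ring, hcb']
      field_simp
    rw [hrhs, hba']
    rw [div_pow, one_pow, div_div]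
    rw [div_le_div_iff₀ (by positivity) (by positivity)]
    nlinarith [sq_nonneg (a+b), mul_pos hb0 hc0]

noncomputable def G (n : ℕ) (x : ℝ) : ℝ :=
  (1/2)*Real.sqrt x + (∑ j ∈ range n, Real.sqrt (x - ((j:ℝ)+1))) - (2/3)*Real.sqrt x^3

lemma G_succ (n : ℕ) (x : ℝ) (hx : 1 ≤ x) :
    G (n+1) x = G n (x-1) - ((2/3)*Real.sqrt x^3 - (2/3)*Real.sqrt (x-1)^3
      - (Real.sqrt (x-1) + Real.sqrt x)/2) := by
  have hsum : ∑ j ∈ range (n+1), Real.sqrt (x - ((j:ℝ)+1))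
      = Real.sqrt (x-1) + ∑ j ∈ range n, Real.sqrt (x - 1 - ((j:ℝ)+1)) := by
    rw [Finset.sum_range_succ', add_comm]
    congr 1
    · norm_num
    · refine Finset.sum_congr rfl fun i _ => ?_
      congr 1
      push_cast
      ring
  unfold G
  rw [hsum]
  ring

lemma G_ind (n : ℕ) : ∀ x : ℝ, (n:ℝ) < x → x ≤ (n:ℝ)+1 →
    G 0 (x - n) - (2/Real.sqrt (x - n + 1) - 2/Real.sqrt (x+1)) ≤ G n x ∧ G n x ≤ G 0 (x - n) := by
  induction n with
  | zero => intro x h1 h2; simp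
  | succ n ih =>
    intro x h1 h2
    push_cast at h1 h2
    have hy1 : (n:ℝ) < x - 1 := by linarith
    have hy2 : x - 1 ≤ (n:ℝ) + 1 := by linarith
    have hy0 : 0 ≤ x - 1 := by
      have : (0:ℝ) ≤ (n:ℝ) := Nat.cast_nonneg n
      linarith
    obtain ⟨ihl, ihr⟩ := ih (x-1) hy1 hy2
    obtain ⟨ke1, ke2⟩ := key_ineq (x-1) hy0
    have hx1 : x - 1 + 1 = x := by ring
    have hx2 : x - 1 + 2 = x + 1 := by ring
    rw [hx1] at ke1 ke2
    rw [hx2] at ke2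
    have hGs := G_succ n x (by linarith)
    have hcast : ((n+1:ℕ):ℝ) = (n:ℝ)+1 := by push_cast; ring
    rw [hcast]
    have he1 : x - ((n:ℝ)+1) = x - 1 - n := by ring
    have he2 : x - ((n:ℝ)+1) + 1 = x - 1 - n + 1 := by ring
    rw [he1]
    rw [hx1] at ihl
    constructor
    · rw [hGs]; linarith
    · rw [hGs]; linarith

lemma G_abs (n : ℕ) (x : ℝ) (h1 : (n:ℝ) < x) (h2 : x ≤ (n:ℝ)+1) : |G n x| ≤ 3 := by
  obtain ⟨hl, hr⟩ := G_ind n x h1 h2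
  have hn0 : (0:ℝ) ≤ (n:ℝ) := Nat.cast_nonneg n
  set t := x - (n:ℝ) with ht
  have ht0 : 0 < t := by simp [ht]; linarith
  have ht1 : t ≤ 1 := by simp [ht]; linarith
  have hu0 : 0 ≤ Real.sqrt t := Real.sqrt_nonneg t
  have hu1 : Real.sqrt t ≤ 1 := by
    have := Real.sqrt_le_sqrt ht1
    rwa [Real.sqrt_one] at this
  have hG0 : |G 0 t| ≤ 1 := by
    have hG : G 0 t = (1/2)*Real.sqrt t - (2/3)*Real.sqrt t^3 := by simp [G]
    have hc1 : Real.sqrt t^3 ≤ 1 := pow_le_one₀ hu0 hu1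
    have hc0 : 0 ≤ Real.sqrt t^3 := pow_nonneg hu0 3
    rw [hG, abs_le]
    constructor <;> nlinarith
  have hs1 : (1:ℝ) ≤ Real.sqrt (t+1) := by
    have := Real.sqrt_le_sqrt (show (1:ℝ) ≤ t+1 by linarith)
    rwa [Real.sqrt_one] at this
  have hsx : Real.sqrt (t+1) ≤ Real.sqrt (x+1) := Real.sqrt_le_sqrt (by linarith)
  have hd1 : 2/Real.sqrt (x+1) ≤ 2/Real.sqrt (t+1) := by
    apply div_le_div_of_nonneg_left (by norm_num) (by linarith) hsx
  have hd2 : 2/Real.sqrt (t+1) ≤ 2 := by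
    rw [div_le_iff₀ (by linarith)]
    nlinarith
  have hd3 : 0 < 2/Real.sqrt (x+1) := by
    have h := Real.sqrt_pos.mpr (show (0:ℝ) < x+1 by linarith)
    positivity
  rw [abs_le] at hG0 ⊢
  constructor
  · linarith [hG0.1]
  · linarith [hG0.2]

lemma core (x : ℝ) :
    |(1/2)*(max x 0)^((1:ℝ)/2) + (∑' j:ℕ, (max (x-((j:ℝ)+1)) 0)^((1:ℝ)/2))
      - (2/3)*(max x 0)^((3:ℝ)/2)| ≤ 3 := by
  rcases le_or_gt x 0 with hx | hx
  · have hm : max x 0 = 0 := max_eq_right hx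
    have hz : (0:ℝ)^((1:ℝ)/2) = 0 := Real.zero_rpow (by norm_num)
    have hz3 : (0:ℝ)^((3:ℝ)/2) = 0 := Real.zero_rpow (by norm_num)
    have hterm : ∀ j:ℕ, (max (x-((j:ℝ)+1)) 0)^((1:ℝ)/2) = 0 := by
      intro j
      have hj0 : (0:ℝ) ≤ (j:ℝ) := Nat.cast_nonneg j
      have hmj : max (x-((j:ℝ)+1)) 0 = 0 := max_eq_right (by linarith)
      rw [hmj, hz]
    rw [hm, hz, hz3, tsum_congr hterm]
    simp
  · obtain ⟨n, hn1, hn2⟩ : ∃ n:ℕ, (n:ℝ) < x ∧ x ≤ (n:ℝ)+1 := by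
      refine ⟨⌈x⌉₊ - 1, ?_, ?_⟩
      · have h1 : 1 ≤ ⌈x⌉₊ := Nat.one_le_ceil_iff.mpr hx
        have h2 : (⌈x⌉₊:ℝ) < x + 1 := Nat.ceil_lt_add_one hx.le
        have : ((⌈x⌉₊ - 1 : ℕ):ℝ) = (⌈x⌉₊:ℝ) - 1 := by
          push_cast [h1]
          ring
        rw [this]; linarith
      · have h1 : 1 ≤ ⌈x⌉₊ := Nat.one_le_ceil_iff.mpr hx
        have h2 : x ≤ (⌈x⌉₊:ℝ) := Nat.le_ceil x
        have : ((⌈x⌉₊ - 1 : ℕ):ℝ) = (⌈x⌉₊:ℝ) - 1 := by push_cast [h1]; ring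
        rw [this]; linarith
    have hm : max x 0 = x := max_eq_left hx.le
    have htsum : (∑' j:ℕ, (max (x-((j:ℝ)+1)) 0)^((1:ℝ)/2))
        = ∑ j ∈ range n, Real.sqrt (x - ((j:ℝ)+1)) := by
      rw [tsum_eq_sum (s := range n) ?_]
      · refine Finset.sum_congr rfl fun j hj => ?_
        have hj' : (j:ℝ) < n := by exact_mod_cast Finset.mem_range.mp hj
        have hpos : 0 ≤ x - ((j:ℝ)+1) := by
          have : (j:ℝ)+1 ≤ (n:ℝ) := by
            have : (j:ℕ) + 1 ≤ n := Finset.mem_range.mp hj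
            exact_mod_cast this
          linarith
        rw [max_eq_left hpos, ← Real.sqrt_eq_rpow]
      · intro j hj
        have hj' : (n:ℝ) ≤ (j:ℝ) := by
          have h := Nat.le_of_not_lt (fun hc => hj (Finset.mem_range.mpr hc))
          exact_mod_cast h
        have hle : x - ((j:ℝ)+1) ≤ 0 := by linarith
        rw [max_eq_right hle, Real.zero_rpow (by norm_num)]
    have h3 : x ^ ((3:ℝ)/2) = Real.sqrt x ^ 3 := by
      rw [Real.rpow_div_two_eq_sqrt 3 hx.le, show ((3:ℝ)) = ((3:ℕ):ℝ) by norm_num,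
        Real.rpow_natCast]
    rw [hm, htsum, ← Real.sqrt_eq_rpow, h3]
    exact G_abs n x hn1 hn2

/-- Uniform estimate `P′_B(w) − P′(w) = O(B^(3/2))` (equation (25-3-29)):
there is `C > 0` such that for all `B > 0` and `w ∈ ℝ`,
`|s_B(w) − (2/3)·(w)₊^(3/2)| ≤ C·B^(3/2)`. -/
theorem magnetic_density_approx :
    ∃ C : ℝ, 0 < C ∧ ∀ B : ℝ, 0 < B → ∀ w : ℝ,
      |s B w - (2 / 3) * (max w 0) ^ ((3 : ℝ) / 2)| ≤ C * B ^ ((3 : ℝ) / 2) := by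
  refine ⟨9, by norm_num, ?_⟩
  intro B hB w
  have hc0 : (0:ℝ) < 2*B := by linarith
  set x := w / (2*B) with hxdef
  have hw : w = 2*B * x := by rw [hxdef]; field_simp [hc0.ne']
  have hmax : ∀ y:ℝ, max (2*B*y) 0 = 2*B * max y 0 := fun y => by
    rw [mul_comm (2*B) y, mul_comm (2*B) (max y 0)]
    simpa using (max_mul_of_nonneg y 0 hc0.le).symm
  have hpow : ∀ y:ℝ, (2*B * max y 0)^((1:ℝ)/2) = (2*B)^((1:ℝ)/2) * (max y 0)^((1:ℝ)/2) :=
    fun y => Real.mul_rpow hc0.le (le_max_right _ _)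
  have hterm : ∀ j:ℕ, (max (w - 2*((j:ℝ)+1)*B) 0)^((1:ℝ)/2)
      = (2*B)^((1:ℝ)/2) * (max (x - ((j:ℝ)+1)) 0)^((1:ℝ)/2) := by
    intro j
    rw [show w - 2*((j:ℝ)+1)*B = 2*B*(x - ((j:ℝ)+1)) from by rw [hw]; ring, hmax, hpow]
  have h32 : (2*B)^((3:ℝ)/2) = 2*B * (2*B)^((1:ℝ)/2) := by
    rw [show (3:ℝ)/2 = 1 + 1/2 by norm_num, Real.rpow_add hc0, Real.rpow_one]
  have hs : s B w = (2*B)^((3:ℝ)/2) * ((1/2)*(max x 0)^((1:ℝ)/2)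
      + ∑' j:ℕ, (max (x-((j:ℝ)+1)) 0)^((1:ℝ)/2)) := by
    rw [s, h32, show max w 0 = 2*B * max x 0 from by rw [hw, hmax], hpow,
      tsum_congr hterm, tsum_mul_left]
    ring
  have hw3 : (max w 0)^((3:ℝ)/2) = (2*B)^((3:ℝ)/2) * (max x 0)^((3:ℝ)/2) := by
    rw [show max w 0 = 2*B * max x 0 from by rw [hw, hmax]]
    exact Real.mul_rpow hc0.le (le_max_right _ _)
  have hdiff : s B w - (2/3) * (max w 0)^((3:ℝ)/2)
      = (2*B)^((3:ℝ)/2) * ((1/2)*(max x 0)^((1:ℝ)/2)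
        + (∑' j:ℕ, (max (x-((j:ℝ)+1)) 0)^((1:ℝ)/2)) - (2/3)*(max x 0)^((3:ℝ)/2)) := by
    rw [hs, hw3]; ring
  rw [hdiff, abs_mul, abs_of_nonneg (Real.rpow_nonneg hc0.le _)]
  have h2B : (2*B)^((3:ℝ)/2) = 2^((3:ℝ)/2) * B^((3:ℝ)/2) := Real.mul_rpow (by norm_num) hB.le
  have h2le : (2:ℝ)^((3:ℝ)/2) ≤ 3 := by
    rw [Real.rpow_div_two_eq_sqrt 3 (by norm_num), show ((3:ℝ)) = ((3:ℕ):ℝ) by norm_num,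
      Real.rpow_natCast]
    have hsq : Real.sqrt 2 ≤ 1.42 := by
      rw [show (1.42:ℝ) = Real.sqrt (1.42^2) from by rw [Real.sqrt_sq (by norm_num)]]
      exact Real.sqrt_le_sqrt (by norm_num)
    push_cast
    have h3 := pow_le_pow_left₀ (Real.sqrt_nonneg 2) hsq 3
    nlinarith
  calc (2*B)^((3:ℝ)/2) * |_| ≤ (2*B)^((3:ℝ)/2) * 3 := by
        exact mul_le_mul_of_nonneg_left (core x) (Real.rpow_nonneg hc0.le _)
    _ ≤ 9 * B^((3:ℝ)/2) := by
        rw [h2B]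
        have hB32 : 0 ≤ B^((3:ℝ)/2) := Real.rpow_nonneg hB.le _
        nlinarith
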